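/- In the setting of weighted $\ell^1$-Tikhonov regularization with exact data: if $x_\alpha$ minimizes $x\mapsto\tfrac12\|F(x^+)-F(x)\|_Y^2+\alpha\|x\|_{\bar r,1}$ and there is $C_2$ with $\tfrac12\|F(x^+)-F(x_\alpha)\|_Y^2+\alpha\|x_\alpha\|_{\bar r,1}\le C_2\alpha^{2-t}$, then $\|F(x^+)-F(x_\alpha)\|_Y\le\sqrt{2C_2}\,\alpha^{(2-t)/2}$. Conversely, if $\|x^+\|_{k_t}\le\varrho$ for $t\in(1,2)$ and the two-sided Lipschitz condition holds on a shrinkage-closed domain $D$ containing $x^+$, then $\tfrac12\|F(x^+)-F(x_\alpha)\|_Y^2+\alpha\|x_\alpha\|_{\bar r,1}\le C_t\varrho^t\alpha^{2-t}$ for a constant $C_t$ depending only on $t$ and $L$. -/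

import Mathlib

open scoped ENNReal
noncomputable section

variable {Λ : Type*}

/-- Weighted `ℓ^p` quasi-norm (value in `ℝ≥0∞`). -/
def wnorm (ω : Λ → ℝ) (p : ℝ) (x : Λ → ℝ) : ℝ≥0∞ :=
  (∑' j, ENNReal.ofReal (ω j ^ p * |x j| ^ p)) ^ (1 / p)

/-- The interpolating weights `(ω_t)_j = (a_j^{2t-2} r_j^{2-t})^{1/t}`. -/
def omegaWeight (a r : Λ → ℝ) (t : ℝ) : Λ → ℝ :=
  fun j => (a j ^ (2 * t - 2) * r j ^ (2 - t)) ^ (1 / t)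

/-- Weighted `ℓ¹` norm `‖x‖_{r,1} = ∑ r_j |x_j|`. -/
def rnorm1 (r : Λ → ℝ) (x : Λ → ℝ) : ℝ≥0∞ := ∑' j, ENNReal.ofReal (r j * |x j|)

/-- Weighted `ℓ²` norm `‖x‖_{a,2} = (∑ a_j² x_j²)^{1/2}`. -/
def anorm2 (a : Λ → ℝ) (x : Λ → ℝ) : ℝ≥0∞ :=
  (∑' j, ENNReal.ofReal (a j ^ 2 * x j ^ 2)) ^ ((1 : ℝ) / 2)

/-- The sum `∑_j a_j⁻² r_j² 𝟙_{a_j⁻² r_j α < |x_j|}`. -/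
def kSum (a r : Λ → ℝ) (α : ℝ) (x : Λ → ℝ) : ℝ≥0∞ :=
  ∑' j, ENNReal.ofReal (if r j * α / a j ^ 2 < |x j| then r j ^ 2 / a j ^ 2 else 0)

/-- The weak quasi-norm `‖x‖_{k_t} = sup_{α>0} α (kSum α x)^{1/t}`. -/
def knorm (a r : Λ → ℝ) (t : ℝ) (x : Λ → ℝ) : ℝ≥0∞ :=
  ⨆ α ∈ Set.Ioi (0 : ℝ), ENNReal.ofReal α * (kSum a r α x) ^ (1 / t)

/-- Hard thresholding operator. -/
def Tthresh (a r : Λ → ℝ) (α : ℝ) (x : Λ → ℝ) : Λ → ℝ :=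
  fun j => if r j * α / a j ^ 2 < |x j| then x j else 0

lemma dyadic_up {d y : ℝ} (hd : 0 < d) (h : d < y) :
    ∃ k : ℕ, 2 ^ k * d < y ∧ y ≤ 2 ^ (k + 1) * d := by
  have hex : ∃ n : ℕ, y ≤ 2 ^ (n + 1) * d := by
    obtain ⟨n, hn⟩ := pow_unbounded_of_one_lt (y / d) (by norm_num : (1:ℝ) < 2)
    have h2 : (2:ℝ) ^ n ≤ 2 ^ (n+1) := pow_le_pow_right₀ (by norm_num) (Nat.le_succ n)
    have := (div_lt_iff₀ hd).mp hn
    exact ⟨n, by nlinarith⟩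
  classical
  refine ⟨Nat.find hex, ?_, Nat.find_spec hex⟩
  rcases Nat.eq_zero_or_pos (Nat.find hex) with h0 | hkpos
  · rw [h0]; simpa using h
  · have hm := Nat.find_min hex (Nat.sub_lt hkpos one_pos)
    push_neg at hm
    have hc : Nat.find hex - 1 + 1 = Nat.find hex := Nat.succ_pred_eq_of_pos hkpos
    rwa [hc] at hm

lemma dyadic_down {d y : ℝ} (hy : 0 < y) (h : y ≤ d) :
    ∃ k : ℕ, d / 2 ^ (k + 1) < y ∧ y ≤ d / 2 ^ k := by
  have hd : 0 < d := lt_of_lt_of_le hy h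
  have hex : ∃ n : ℕ, d / 2 ^ (n + 1) < y := by
    obtain ⟨n, hn⟩ := pow_unbounded_of_one_lt (d / y) (by norm_num : (1:ℝ) < 2)
    refine ⟨n, ?_⟩
    rw [div_lt_iff₀ (by positivity)]
    have h2 : d / y < 2 ^ (n+1) :=
      lt_of_lt_of_le hn (pow_le_pow_right₀ (by norm_num) (Nat.le_succ n))
    nlinarith [(div_lt_iff₀ hy).mp h2]
  classical
  refine ⟨Nat.find hex, Nat.find_spec hex, ?_⟩
  rcases Nat.eq_zero_or_pos (Nat.find hex) with h0 | hkpos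
  · rw [h0]; simpa using h
  · have hm := Nat.find_min hex (Nat.sub_lt hkpos one_pos)
    push_neg at hm
    have hc : Nat.find hex - 1 + 1 = Nat.find hex := Nat.succ_pred_eq_of_pos hkpos
    rwa [hc] at hm

lemma kSum_bound (a r : Λ → ℝ) {t ρ : ℝ} (ht : 0 < t) (hρ : 0 < ρ) (x : Λ → ℝ)
    (hk : knorm a r t x ≤ ENNReal.ofReal ρ) {β : ℝ} (hβ : 0 < β) :
    kSum a r β x ≤ ENNReal.ofReal ((ρ / β) ^ t) := by
  have h1 : ENNReal.ofReal β * (kSum a r β x) ^ (1 / t) ≤ ENNReal.ofReal ρ :=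
    le_trans (le_iSup₂ (f := fun α (_ : α ∈ Set.Ioi (0:ℝ)) =>
      ENNReal.ofReal α * (kSum a r α x) ^ (1 / t)) β hβ) hk
  have hβ0 : ENNReal.ofReal β ≠ 0 := by simp [hβ]
  have h2 : (kSum a r β x) ^ (1 / t) ≤ ENNReal.ofReal ρ / ENNReal.ofReal β := by
    rw [ENNReal.le_div_iff_mul_le (Or.inl hβ0) (Or.inl ENNReal.ofReal_ne_top), mul_comm]
    exact h1
  have h3 : ((kSum a r β x) ^ (1 / t)) ^ t ≤ (ENNReal.ofReal ρ / ENNReal.ofReal β) ^ t :=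
    ENNReal.rpow_le_rpow h2 ht.le
  rwa [← ENNReal.rpow_mul, one_div, inv_mul_cancel₀ ht.ne', ENNReal.rpow_one,
    ← ENNReal.ofReal_div_of_pos hβ, ENNReal.ofReal_rpow_of_pos (by positivity)] at h3

lemma geom_ofReal {c q : ℝ} (hc : 0 ≤ c) (hq0 : 0 ≤ q) (hq : q < 1) :
    ∑' k : ℕ, ENNReal.ofReal (c * q ^ k) ≤ ENNReal.ofReal (c / (1 - q)) := by
  have hsum : Summable (fun k : ℕ => q ^ k) := summable_geometric_of_lt_one hq0 hq
  calc ∑' k : ℕ, ENNReal.ofReal (c * q ^ k)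
      = ∑' k : ℕ, ENNReal.ofReal c * ENNReal.ofReal (q ^ k) := by
        simp_rw [← ENNReal.ofReal_mul hc]
    _ = ENNReal.ofReal c * ∑' k : ℕ, ENNReal.ofReal (q ^ k) := ENNReal.tsum_mul_left
    _ = ENNReal.ofReal c * ENNReal.ofReal (∑' k : ℕ, q ^ k) := by
        rw [ENNReal.ofReal_tsum_of_nonneg (fun k => by positivity) hsum]
    _ ≤ ENNReal.ofReal (c / (1 - q)) := by
        rw [tsum_geometric_of_lt_one hq0 hq, ← ENNReal.ofReal_mul hc, div_eq_mul_inv]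

lemma calcA (t α ρ : ℝ) (hα : 0 < α) (hρ : 0 < ρ) (k : ℕ) :
    2 ^ (k + 1) * α * (ρ / (2 ^ k * α)) ^ t
      = (2 * (ρ ^ t * α ^ ((1:ℝ) - t))) * ((2:ℝ) ^ ((1:ℝ) - t)) ^ k := by
  have h2 : (0:ℝ) < 2 := two_pos
  have h2k : ((2:ℝ) ^ k) = (2:ℝ) ^ ((k:ℕ):ℝ) := (Real.rpow_natCast 2 k).symm
  have p1 : (0:ℝ) < (2:ℝ) ^ ((k:ℝ) * t) := Real.rpow_pos_of_pos h2 _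
  have p3 : (0:ℝ) < α ^ t := Real.rpow_pos_of_pos hα _
  have pk : (0:ℝ) < (2:ℝ) ^ ((k:ℝ)) := Real.rpow_pos_of_pos h2 _
  have e2 : (2:ℝ) ^ (((1:ℝ) - t) * (k:ℝ)) = 2 ^ ((k:ℝ)) / 2 ^ ((k:ℝ) * t) := by
    rw [eq_div_iff p1.ne', ← Real.rpow_add h2]; ring_nf
  rw [Real.div_rpow hρ.le (by positivity), Real.mul_rpow (by positivity) hα.le,
    pow_succ, h2k, ← Real.rpow_natCast ((2:ℝ) ^ ((1:ℝ) - t)) k,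
    ← Real.rpow_mul h2.le, ← Real.rpow_mul h2.le,
    Real.rpow_sub hα, Real.rpow_one, e2]
  field_simp

lemma calcB (t α ρ : ℝ) (hα : 0 < α) (hρ : 0 < ρ) (k : ℕ) :
    (α / 2 ^ k) ^ 2 * (ρ * 2 ^ (k + 1) / α) ^ t
      = ((2:ℝ) ^ t * (ρ ^ t * α ^ ((2:ℝ) - t))) * ((2:ℝ) ^ (t - (2:ℝ))) ^ k := by
  have h2 : (0:ℝ) < 2 := two_pos
  have h2k : ((2:ℝ) ^ k) = (2:ℝ) ^ ((k:ℕ):ℝ) := (Real.rpow_natCast 2 k).symm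
  have p1 : (0:ℝ) < (2:ℝ) ^ ((k:ℝ) * t) := Real.rpow_pos_of_pos h2 _
  have p3 : (0:ℝ) < α ^ t := Real.rpow_pos_of_pos hα _
  have pk : (0:ℝ) < (2:ℝ) ^ ((k:ℝ)) := Real.rpow_pos_of_pos h2 _
  have p2t : (0:ℝ) < (2:ℝ) ^ t := Real.rpow_pos_of_pos h2 _
  have e2 : (2:ℝ) ^ ((t - (2:ℝ)) * (k:ℝ))
      = 2 ^ ((k:ℝ) * t) / (2 ^ ((k:ℝ)) * 2 ^ ((k:ℝ))) := by
    rw [eq_div_iff (by positivity), ← Real.rpow_add h2, ← Real.rpow_add h2]; ring_nf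
  have h2k1 : ((2:ℝ) ^ (k+1)) = (2:ℝ) ^ (((k:ℝ) + 1)) := by
    rw [← Real.rpow_natCast 2 (k+1)]; push_cast; ring_nf
  have e3 : (2:ℝ) ^ (((k:ℝ) + 1) * t) = 2 ^ t * 2 ^ ((k:ℝ) * t) := by
    rw [← Real.rpow_add h2]; ring_nf
  have hα2 : α ^ ((2:ℝ)) = α * α := by
    rw [show (2:ℝ) = ((2:ℕ):ℝ) by norm_num, Real.rpow_natCast]; ring
  rw [div_pow, Real.div_rpow (by positivity) hα.le,
    Real.mul_rpow hρ.le (by positivity), h2k1, ← Real.rpow_mul h2.le, e3,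
    h2k, ← Real.rpow_natCast ((2:ℝ) ^ (t - (2:ℝ))) k,
    ← Real.rpow_mul h2.le, Real.rpow_sub hα, e2, hα2, sq]
  field_simp

lemma estA (a r : Λ → ℝ) (ha : ∀ j, 0 < a j) (hr : ∀ j, 0 < r j)
    {t ρ α : ℝ} (ht1 : 1 < t) (hρ : 0 < ρ) (hα : 0 < α) (x : Λ → ℝ)
    (hk : knorm a r t x ≤ ENNReal.ofReal ρ) :
    rnorm1 r (Tthresh a r α x) ≤
      ENNReal.ofReal ((2 * (ρ ^ t * α ^ ((1:ℝ) - t))) / (1 - (2:ℝ) ^ ((1:ℝ) - t))) := by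
  classical
  set f : Λ → ℕ → ℝ≥0∞ := fun j k =>
    if 2 ^ k * (r j * α / a j ^ 2) < |x j| ∧ |x j| ≤ 2 ^ (k + 1) * (r j * α / a j ^ 2)
    then ENNReal.ofReal (2 ^ (k + 1) * α * (r j ^ 2 / a j ^ 2)) else 0 with hf
  have step1 : ∀ j, ENNReal.ofReal (r j * |Tthresh a r α x j|) ≤ ∑' k, f j k := by
    intro j
    by_cases hc : r j * α / a j ^ 2 < |x j|
    · have hd0 : 0 < r j * α / a j ^ 2 := by
        have := hr j; have := ha j; positivity
      obtain ⟨k, hk1, hk2⟩ := dyadic_up hd0 hc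
      refine le_trans ?_ (ENNReal.le_tsum k)
      have hcond : 2 ^ k * (r j * α / a j ^ 2) < |x j| ∧
          |x j| ≤ 2 ^ (k + 1) * (r j * α / a j ^ 2) := ⟨hk1, hk2⟩
      rw [hf]; simp only [Tthresh, if_pos hc]; rw [if_pos hcond]
      apply ENNReal.ofReal_le_ofReal
      have := mul_le_mul_of_nonneg_left hk2 (hr j).le
      calc r j * |x j| ≤ r j * (2 ^ (k + 1) * (r j * α / a j ^ 2)) := this
        _ = 2 ^ (k + 1) * α * (r j ^ 2 / a j ^ 2) := by field_simp; try ring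
    · simp [Tthresh, if_neg hc]
  have step3 : ∀ k : ℕ, ∑' j, f j k ≤
      ENNReal.ofReal (2 ^ (k + 1) * α) * kSum a r (2 ^ k * α) x := by
    intro k
    rw [kSum, ← ENNReal.tsum_mul_left]
    refine ENNReal.tsum_le_tsum fun j => ?_
    by_cases hjc : 2 ^ k * (r j * α / a j ^ 2) < |x j| ∧
        |x j| ≤ 2 ^ (k + 1) * (r j * α / a j ^ 2)
    · have hind : r j * (2 ^ k * α) / a j ^ 2 < |x j| := by
        have := hjc.1; rw [show r j * (2 ^ k * α) / a j ^ 2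
          = 2 ^ k * (r j * α / a j ^ 2) by ring]; exact this
      rw [hf]; simp only [if_pos hjc, if_pos hind]
      rw [← ENNReal.ofReal_mul (by positivity)]
    · rw [hf]; simp only [if_neg hjc]; exact zero_le
  have step4 : ∀ k : ℕ, ∑' j, f j k ≤
      ENNReal.ofReal ((2 * (ρ ^ t * α ^ ((1:ℝ) - t))) * ((2:ℝ) ^ ((1:ℝ) - t)) ^ k) := by
    intro k
    refine le_trans (step3 k) ?_
    have hks := kSum_bound a r (by linarith) hρ x hk (β := 2 ^ k * α) (by positivity)
    calc ENNReal.ofReal (2 ^ (k + 1) * α) * kSum a r (2 ^ k * α) x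
        ≤ ENNReal.ofReal (2 ^ (k + 1) * α) * ENNReal.ofReal ((ρ / (2 ^ k * α)) ^ t) :=
          mul_le_mul_right hks _
      _ = ENNReal.ofReal (2 ^ (k + 1) * α * (ρ / (2 ^ k * α)) ^ t) :=
          (ENNReal.ofReal_mul (by positivity)).symm
      _ = _ := by rw [calcA t α ρ hα hρ k]
  have hq0 : (0:ℝ) ≤ (2:ℝ) ^ ((1:ℝ) - t) := by positivity
  have hq1 : (2:ℝ) ^ ((1:ℝ) - t) < 1 :=
    Real.rpow_lt_one_of_one_lt_of_neg (by norm_num) (by linarith)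
  calc rnorm1 r (Tthresh a r α x) ≤ ∑' j, ∑' k, f j k :=
        ENNReal.tsum_le_tsum step1
    _ = ∑' k, ∑' j, f j k := ENNReal.tsum_comm
    _ ≤ ∑' k : ℕ, ENNReal.ofReal
          ((2 * (ρ ^ t * α ^ ((1:ℝ) - t))) * ((2:ℝ) ^ ((1:ℝ) - t)) ^ k) :=
        ENNReal.tsum_le_tsum step4
    _ ≤ _ := geom_ofReal (by positivity) hq0 hq1

lemma estB (a r : Λ → ℝ) (ha : ∀ j, 0 < a j) (hr : ∀ j, 0 < r j)
    {t ρ α : ℝ} (ht2 : t < 2) (ht0 : 0 < t) (hρ : 0 < ρ) (hα : 0 < α) (x : Λ → ℝ)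
    (hk : knorm a r t x ≤ ENNReal.ofReal ρ) :
    ∑' j, ENNReal.ofReal (a j ^ 2 * (x j - Tthresh a r α x j) ^ 2) ≤
      ENNReal.ofReal (((2:ℝ) ^ t * (ρ ^ t * α ^ ((2:ℝ) - t))) / (1 - (2:ℝ) ^ (t - (2:ℝ)))) := by
  classical
  set f : Λ → ℕ → ℝ≥0∞ := fun j k =>
    if (r j * α / a j ^ 2) / 2 ^ (k + 1) < |x j| ∧ |x j| ≤ (r j * α / a j ^ 2) / 2 ^ k
    then ENNReal.ofReal ((α / 2 ^ k) ^ 2 * (r j ^ 2 / a j ^ 2)) else 0 with hf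
  have step1 : ∀ j, ENNReal.ofReal (a j ^ 2 * (x j - Tthresh a r α x j) ^ 2) ≤ ∑' k, f j k := by
    intro j
    by_cases hc : r j * α / a j ^ 2 < |x j|
    · simp [Tthresh, if_pos hc]
    · by_cases hx : x j = 0
      · simp [Tthresh, hx]
      · push_neg at hc
        obtain ⟨k, hk1, hk2⟩ := dyadic_down (abs_pos.mpr hx) hc
        refine le_trans ?_ (ENNReal.le_tsum k)
        have hcond : (r j * α / a j ^ 2) / 2 ^ (k + 1) < |x j| ∧
            |x j| ≤ (r j * α / a j ^ 2) / 2 ^ k := ⟨hk1, hk2⟩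
        rw [hf]
        simp only [Tthresh, if_neg (not_lt.mpr hc), sub_zero]
        rw [if_pos hcond]
        apply ENNReal.ofReal_le_ofReal
        have h1 : (x j) ^ 2 ≤ ((r j * α / a j ^ 2) / 2 ^ k) ^ 2 := by
          rw [← sq_abs]
          exact pow_le_pow_left₀ (abs_nonneg _) hk2 2
        calc a j ^ 2 * x j ^ 2 ≤ a j ^ 2 * ((r j * α / a j ^ 2) / 2 ^ k) ^ 2 := by
              nlinarith [sq_nonneg (a j), h1]
          _ = (α / 2 ^ k) ^ 2 * (r j ^ 2 / a j ^ 2) := by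
              field_simp [(ha j).ne']
  have step3 : ∀ k : ℕ, ∑' j, f j k ≤
      ENNReal.ofReal ((α / 2 ^ k) ^ 2) * kSum a r (α / 2 ^ (k + 1)) x := by
    intro k
    rw [kSum, ← ENNReal.tsum_mul_left]
    refine ENNReal.tsum_le_tsum fun j => ?_
    by_cases hjc : (r j * α / a j ^ 2) / 2 ^ (k + 1) < |x j| ∧
        |x j| ≤ (r j * α / a j ^ 2) / 2 ^ k
    · have hind : r j * (α / 2 ^ (k + 1)) / a j ^ 2 < |x j| := by
        have := hjc.1; rw [show r j * (α / 2 ^ (k + 1)) / a j ^ 2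
          = (r j * α / a j ^ 2) / 2 ^ (k + 1) by ring]; exact this
      rw [hf]; simp only [if_pos hjc, if_pos hind]
      rw [← ENNReal.ofReal_mul (by positivity)]
    · rw [hf]; simp only [if_neg hjc]; exact zero_le
  have step4 : ∀ k : ℕ, ∑' j, f j k ≤
      ENNReal.ofReal (((2:ℝ) ^ t * (ρ ^ t * α ^ ((2:ℝ) - t))) * ((2:ℝ) ^ (t - (2:ℝ))) ^ k) := by
    intro k
    refine le_trans (step3 k) ?_
    have hks := kSum_bound a r ht0 hρ x hk (β := α / 2 ^ (k + 1)) (by positivity)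
    calc ENNReal.ofReal ((α / 2 ^ k) ^ 2) * kSum a r (α / 2 ^ (k + 1)) x
        ≤ ENNReal.ofReal ((α / 2 ^ k) ^ 2) *
            ENNReal.ofReal ((ρ / (α / 2 ^ (k + 1))) ^ t) := mul_le_mul_right hks _
      _ = ENNReal.ofReal ((α / 2 ^ k) ^ 2 * (ρ * 2 ^ (k + 1) / α) ^ t) := by
          rw [← ENNReal.ofReal_mul (by positivity), div_div_eq_mul_div]
      _ = _ := by rw [calcB t α ρ hα hρ k]
  have hq0 : (0:ℝ) ≤ (2:ℝ) ^ (t - (2:ℝ)) := by positivity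
  have hq1 : (2:ℝ) ^ (t - (2:ℝ)) < 1 :=
    Real.rpow_lt_one_of_one_lt_of_neg (by norm_num) (by linarith)
  calc ∑' j, ENNReal.ofReal (a j ^ 2 * (x j - Tthresh a r α x j) ^ 2)
      ≤ ∑' j, ∑' k, f j k := ENNReal.tsum_le_tsum step1
    _ = ∑' k, ∑' j, f j k := ENNReal.tsum_comm
    _ ≤ ∑' k : ℕ, ENNReal.ofReal
          (((2:ℝ) ^ t * (ρ ^ t * α ^ ((2:ℝ) - t))) * ((2:ℝ) ^ (t - (2:ℝ))) ^ k) :=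
        ENNReal.tsum_le_tsum step4
    _ ≤ _ := geom_ofReal (by positivity) hq0 hq1

theorem stmt15 {Y : Type*} [NormedAddCommGroup Y]
    (a r : Λ → ℝ) (ha : ∀ j, 0 < a j) (hr : ∀ j, 0 < r j)
    (D : Set (Λ → ℝ)) (F : (Λ → ℝ) → Y) (L : ℝ) (hL : 0 < L)
    (hlipLow : ∀ x₁ ∈ D, ∀ x₂ ∈ D,
      anorm2 a (x₁ - x₂) ≤ ENNReal.ofReal (L * ‖F x₁ - F x₂‖))
    (hlipUp : ∀ x₁ ∈ D, ∀ x₂ ∈ D,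
      ENNReal.ofReal ‖F x₁ - F x₂‖ ≤ ENNReal.ofReal L * anorm2 a (x₁ - x₂))
    (hshrink : ∀ x ∈ D, ∀ z : Λ → ℝ, (∀ j, |z j| ≤ |x j|) → z ∈ D)
    (t : ℝ) (ht : t ∈ Set.Ioo (1:ℝ) 2)
    (xplus : Λ → ℝ) (hxD : xplus ∈ D) :
    (∀ α > (0:ℝ), ∀ C₂ : ℝ, ∀ xa ∈ D,
      (∀ z ∈ D, ENNReal.ofReal ((1 / 2) * ‖F xplus - F xa‖ ^ 2) +
          ENNReal.ofReal α * rnorm1 r xa ≤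
        ENNReal.ofReal ((1 / 2) * ‖F xplus - F z‖ ^ 2) + ENNReal.ofReal α * rnorm1 r z) →
      ENNReal.ofReal ((1 / 2) * ‖F xplus - F xa‖ ^ 2) + ENNReal.ofReal α * rnorm1 r xa ≤
        ENNReal.ofReal (C₂ * α ^ (2 - t)) →
      ‖F xplus - F xa‖ ≤ Real.sqrt (2 * C₂) * α ^ ((2 - t) / 2)) ∧
    (∀ ρ > (0:ℝ), knorm a r t xplus ≤ ENNReal.ofReal ρ →
      ∃ Ct > (0:ℝ), ∀ α > (0:ℝ), ∀ xa ∈ D,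
        (∀ z ∈ D, ENNReal.ofReal ((1 / 2) * ‖F xplus - F xa‖ ^ 2) +
            ENNReal.ofReal α * rnorm1 r xa ≤
          ENNReal.ofReal ((1 / 2) * ‖F xplus - F z‖ ^ 2) +
            ENNReal.ofReal α * rnorm1 r z) →
        ENNReal.ofReal ((1 / 2) * ‖F xplus - F xa‖ ^ 2) + ENNReal.ofReal α * rnorm1 r xa ≤
          ENNReal.ofReal (Ct * ρ ^ t * α ^ (2 - t))) := by
  obtain ⟨ht1, ht2⟩ := ht
  constructor
  · -- Part 1
    intro α hα C₂ xa hxa hmin hbound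
    have hkey : ENNReal.ofReal ((1 / 2) * ‖F xplus - F xa‖ ^ 2) ≤
        ENNReal.ofReal (C₂ * α ^ (2 - t)) := le_trans le_self_add hbound
    have hαt : (0:ℝ) < α ^ (2 - t) := Real.rpow_pos_of_pos hα _
    by_cases hC : 0 ≤ C₂
    · have hreal : (1 / 2) * ‖F xplus - F xa‖ ^ 2 ≤ C₂ * α ^ (2 - t) :=
        (ENNReal.ofReal_le_ofReal_iff (by positivity)).mp hkey
      have h2 : ‖F xplus - F xa‖ ^ 2 ≤ 2 * C₂ * α ^ (2 - t) := by linarith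
      have h3 : ‖F xplus - F xa‖ ≤ Real.sqrt (2 * C₂ * α ^ (2 - t)) := by
        rw [← Real.sqrt_sq (norm_nonneg _)]
        exact Real.sqrt_le_sqrt h2
      calc ‖F xplus - F xa‖ ≤ Real.sqrt (2 * C₂ * α ^ (2 - t)) := h3
        _ = Real.sqrt (2 * C₂) * Real.sqrt (α ^ (2 - t)) := Real.sqrt_mul (by positivity) _
        _ = Real.sqrt (2 * C₂) * α ^ ((2 - t) / 2) := by
            congr 1
            rw [Real.sqrt_eq_rpow, ← Real.rpow_mul hα.le]
            congr 1
            ring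
    · push_neg at hC
      have hneg : C₂ * α ^ (2 - t) < 0 := mul_neg_of_neg_of_pos hC hαt
      have h0 : ENNReal.ofReal ((1 / 2) * ‖F xplus - F xa‖ ^ 2) = 0 := by
        refine le_antisymm ?_ zero_le
        rw [show (0:ℝ≥0∞) = ENNReal.ofReal (C₂ * α ^ (2 - t)) from
          (ENNReal.ofReal_eq_zero.mpr hneg.le).symm]
        exact hkey
      have : (1 / 2) * ‖F xplus - F xa‖ ^ 2 ≤ 0 := ENNReal.ofReal_eq_zero.mp h0
      have hn0 : ‖F xplus - F xa‖ = 0 := by nlinarith [sq_nonneg ‖F xplus - F xa‖, norm_nonneg (F xplus - F xa)]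
      rw [hn0]
      have : 0 ≤ Real.sqrt (2 * C₂) * α ^ ((2 - t) / 2) := by positivity
      linarith
  · -- Part 2
    intro ρ hρ hknorm
    have hq1 : (2:ℝ) ^ ((1:ℝ) - t) < 1 :=
      Real.rpow_lt_one_of_one_lt_of_neg (by norm_num) (by linarith)
    have hq2 : (2:ℝ) ^ (t - (2:ℝ)) < 1 :=
      Real.rpow_lt_one_of_one_lt_of_neg (by norm_num) (by linarith)
    have hq1' : (0:ℝ) < 1 - (2:ℝ) ^ ((1:ℝ) - t) := by linarith
    have hq2' : (0:ℝ) < 1 - (2:ℝ) ^ (t - (2:ℝ)) := by linarith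
    have h2t : (0:ℝ) < (2:ℝ) ^ t := Real.rpow_pos_of_pos two_pos _
    refine ⟨(1/2) * L ^ 2 * ((2:ℝ) ^ t / (1 - (2:ℝ) ^ (t - (2:ℝ)))) +
      2 / (1 - (2:ℝ) ^ ((1:ℝ) - t)), by positivity, ?_⟩
    intro α hα xa hxa hmin
    set z := Tthresh a r α xplus with hz
    have hzD : z ∈ D := by
      refine hshrink xplus hxD z fun j => ?_
      by_cases hc : r j * α / a j ^ 2 < |xplus j|
      · simp [hz, Tthresh, if_pos hc]
      · simp [hz, Tthresh, if_neg hc]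
    have h1 := hmin z hzD
    -- bound the residual term
    set M := ((2:ℝ) ^ t * (ρ ^ t * α ^ ((2:ℝ) - t))) / (1 - (2:ℝ) ^ (t - (2:ℝ))) with hM
    have hαt : (0:ℝ) < α ^ ((2:ℝ) - t) := Real.rpow_pos_of_pos hα _
    have hρt : (0:ℝ) < ρ ^ t := Real.rpow_pos_of_pos hρ _
    have hM0 : 0 < M := by rw [hM]; positivity
    have hB : anorm2 a (xplus - z) ≤ ENNReal.ofReal (M ^ ((1:ℝ)/2)) := by
      have hS : ∑' j, ENNReal.ofReal (a j ^ 2 * ((xplus - z) j) ^ 2) ≤ ENNReal.ofReal M := by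
        simpa [hz] using estB a r ha hr ht2 (by linarith) hρ hα xplus hknorm
      calc anorm2 a (xplus - z)
          ≤ (ENNReal.ofReal M) ^ ((1:ℝ)/2) := ENNReal.rpow_le_rpow hS (by norm_num)
        _ = ENNReal.ofReal (M ^ ((1:ℝ)/2)) := ENNReal.ofReal_rpow_of_pos hM0
    have hFz : ‖F xplus - F z‖ ≤ L * M ^ ((1:ℝ)/2) := by
      have := le_trans (hlipUp xplus hxD z hzD) (mul_le_mul_right hB _)
      rw [← ENNReal.ofReal_mul hL.le] at this
      exact (ENNReal.ofReal_le_ofReal_iff (by positivity)).mp this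
    have hFz2 : ‖F xplus - F z‖ ^ 2 ≤ L ^ 2 * M := by
      have hsq : (M ^ ((1:ℝ)/2)) ^ 2 = M := by
        rw [← Real.rpow_natCast (M ^ ((1:ℝ)/2)) 2, ← Real.rpow_mul hM0.le]
        norm_num
      calc ‖F xplus - F z‖ ^ 2 ≤ (L * M ^ ((1:ℝ)/2)) ^ 2 :=
            pow_le_pow_left₀ (norm_nonneg _) hFz 2
        _ = L ^ 2 * M := by rw [mul_pow, hsq]
    -- bound the penalty term
    set A := (2 * (ρ ^ t * α ^ ((1:ℝ) - t))) / (1 - (2:ℝ) ^ ((1:ℝ) - t)) with hA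
    have hA' : rnorm1 r z ≤ ENNReal.ofReal A := estA a r ha hr ht1 hρ hα xplus hknorm
    have hαα : α ^ ((2:ℝ) - t) = α * α ^ ((1:ℝ) - t) := by
      rw [show (2:ℝ) - t = 1 + ((1:ℝ) - t) by ring, Real.rpow_add hα, Real.rpow_one]
    have hfinal : (1/2) * (L ^ 2 * M) + α * A =
        ((1/2) * L ^ 2 * ((2:ℝ) ^ t / (1 - (2:ℝ) ^ (t - (2:ℝ)))) +
          2 / (1 - (2:ℝ) ^ ((1:ℝ) - t))) * ρ ^ t * α ^ (2 - t) := by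
      rw [hM, hA, hαα]; ring
    calc ENNReal.ofReal ((1 / 2) * ‖F xplus - F xa‖ ^ 2) + ENNReal.ofReal α * rnorm1 r xa
        ≤ ENNReal.ofReal ((1 / 2) * ‖F xplus - F z‖ ^ 2) + ENNReal.ofReal α * rnorm1 r z := h1
      _ ≤ ENNReal.ofReal ((1/2) * (L ^ 2 * M)) + ENNReal.ofReal α * ENNReal.ofReal A := by
          exact add_le_add (ENNReal.ofReal_le_ofReal (by linarith))
            (mul_le_mul_right hA' _)
      _ = ENNReal.ofReal ((1/2) * (L ^ 2 * M) + α * A) := by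
          rw [← ENNReal.ofReal_mul hα.le, ← ENNReal.ofReal_add (by positivity) (by positivity)]
      _ ≤ _ := by rw [hfinal]
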